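/- Let p be a prime with p ∤ 6q, and let r ≥ 1 with 3 | r, writing r = 3m. The number of solutions (u, a, b) with u ∈ (Z/p^m Z)^× and (a, b) ∈ (Z/p^{6m}Z)² to the system {a + 3u ≡ 0 mod p^m, 3u² + 2au + b ≡ 0 mod p^{2m}, u³ + au² + bu + q ≡ 0 mod p^{3m}} equals n_p(q)·p^{7m}, where n_p(q) = #{x ∈ F_p : x³ = -q}. -/

import Mathlib

/-- Solutions of `x ≡ c (mod d)` among `x < d*e`, as an equiv with `Fin e`. -/
def solEquiv (d e : ℕ) [NeZero d] (c : ZMod d) :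
    {x : ℕ // x < d * e ∧ (x : ZMod d) = c} ≃ Fin e where
  toFun x := ⟨x.1 / d, by
    have hd : 0 < d := Nat.pos_of_ne_zero (NeZero.ne d)
    exact Nat.div_lt_of_lt_mul (by simpa [Nat.mul_comm] using x.2.1)⟩
  invFun j := ⟨c.val + d * j.1, by
    have hd : 0 < d := Nat.pos_of_ne_zero (NeZero.ne d)
    constructor
    · calc c.val + d * j.1 < d + d * j.1 := by
            exact Nat.add_lt_add_right (ZMod.val_lt c) _
        _ = d * (j.1 + 1) := by ring
        _ ≤ d * e := Nat.mul_le_mul_left _ (Nat.succ_le_of_lt j.2)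
    · have : ((c.val + d * j.1 : ℕ) : ZMod d) = ((c.val : ℕ) : ZMod d) := by
        push_cast
        simp [ZMod.natCast_self]
      rw [this, ZMod.natCast_val, ZMod.cast_id]⟩
  left_inv x := by
    have hd : 0 < d := Nat.pos_of_ne_zero (NeZero.ne d)
    have hmod : x.1 % d = c.val := by
      conv_rhs => rw [← x.2.2]
      rw [ZMod.val_natCast]
    ext
    simp only
    rw [← hmod]
    exact Nat.mod_add_div x.1 d
  right_inv j := by
    have hd : 0 < d := Nat.pos_of_ne_zero (NeZero.ne d)
    ext
    simp only
    rw [Nat.add_mul_div_left _ _ hd, Nat.div_eq_of_lt (ZMod.val_lt c)]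
    simp

/-- Subtype of nats below `n` satisfying a `ZMod n` predicate, equiv to the `ZMod` subtype. -/
def natSubtypeEquiv (n : ℕ) [NeZero n] (Q : ZMod n → Prop) :
    {u : ℕ // u < n ∧ Q u} ≃ {x : ZMod n // Q x} where
  toFun u := ⟨(u.1 : ZMod n), u.2.2⟩
  invFun x := ⟨x.1.val, ZMod.val_lt x.1, by
    rw [ZMod.natCast_val, ZMod.cast_id]; exact x.2⟩
  left_inv u := by
    ext
    simp only
    rw [ZMod.val_natCast, Nat.mod_eq_of_lt u.2.1]
  right_inv x := by
    ext
    simp only [ZMod.natCast_val, ZMod.cast_id]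

/-- Decomposition of a subtype of triples as an iterated sigma type. -/
def tripleEquiv (P₁ : ℕ → Prop) (P₂ : ℕ → ℕ → Prop) (P₃ : ℕ → ℕ → ℕ → Prop) :
    {x : ℕ × ℕ × ℕ // P₁ x.1 ∧ P₂ x.1 x.2.1 ∧ P₃ x.1 x.2.1 x.2.2} ≃
    Σ u : {u : ℕ // P₁ u}, Σ a : {a : ℕ // P₂ u.1 a}, {b : ℕ // P₃ u.1 a.1 b} where
  toFun x := ⟨⟨x.1.1, x.2.1⟩, ⟨x.1.2.1, x.2.2.1⟩, ⟨x.1.2.2, x.2.2.2⟩⟩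
  invFun y := ⟨⟨y.1.1, y.2.1.1, y.2.2.1⟩, y.1.2, y.2.1.2, y.2.2.2⟩
  left_inv _ := rfl
  right_inv _ := rfl

lemma cube_dvd_sub {n a b c : ℤ} (h : n ∣ a - b) : n ∣ (a^3+c) - (b^3+c) := by
  obtain ⟨d, hd⟩ := h
  exact ⟨d * (a^2+a*b+b^2), by linear_combination (a^2+a*b+b^2) * hd⟩

lemma natCast_mod_pow (u p k : ℕ) : ((u % p ^ k : ℕ) : ℤ) = (u:ℤ) % ((p:ℤ)^k) := by
  push_cast
  ring

lemma dvd_sub_mod_int (u p k : ℕ) : (p:ℤ)^k ∣ (u : ℤ) - ((u % p ^ k : ℕ) : ℤ) := by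
  rw [natCast_mod_pow]
  exact ⟨(u:ℤ)/((p:ℤ)^k), by rw [Int.emod_def]; ring⟩

/-- Solving a linear equation with a unit coefficient in `ZMod n`. -/
lemma unit_solve {n : ℕ} {w x v : ZMod n} (hw : IsUnit w) : x * w = v ↔ x = v * w⁻¹ := by
  have hinv : w * w⁻¹ = 1 := ZMod.mul_inv_of_unit _ hw
  constructor
  · intro h
    rw [← h, mul_assoc, hinv, mul_one]
  · intro h
    rw [h, mul_assoc, ZMod.inv_mul_of_unit _ hw, mul_one]

/-- Hensel step: lifting roots of `X³ + q` from `p^k` to `p^(k+1)` is a bijection. -/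
lemma hensel_step (p : ℕ) (hp : p.Prime) (q : ℤ) (hq : ¬ (p:ℤ) ∣ q) (h3 : ¬ (p:ℤ) ∣ 3)
    (k : ℕ) (hk : 1 ≤ k) :
    Nat.card {u : ℕ // u < p ^ (k+1) ∧ (p:ℤ) ^ (k+1) ∣ (u:ℤ)^3 + q} =
    Nat.card {u : ℕ // u < p ^ k ∧ (p:ℤ) ^ k ∣ (u:ℤ)^3 + q} := by
  have hppos : 0 < p := hp.pos
  have hpz : Prime (p : ℤ) := Nat.prime_iff_prime_int.mp hp
  have hpu : ∀ (j : ℕ) (u : ℤ), 1 ≤ j → (p:ℤ)^j ∣ u^3 + q → ¬ (p:ℤ) ∣ u := by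
    intro j u hj hd hdu
    apply hq
    have h1 : (p:ℤ) ∣ u^3 + q := dvd_trans (dvd_pow_self _ (by omega : j ≠ 0)) hd
    have h2 : (p:ℤ) ∣ u^3 := dvd_pow hdu (by norm_num)
    simpa using h1.sub h2
  set f : {u : ℕ // u < p ^ (k+1) ∧ (p:ℤ) ^ (k+1) ∣ (u:ℤ)^3 + q} →
      {u : ℕ // u < p ^ k ∧ (p:ℤ) ^ k ∣ (u:ℤ)^3 + q} :=
    fun u => ⟨u.1 % p ^ k, Nat.mod_lt _ (pow_pos hppos _), by
      have hmd := dvd_sub_mod_int u.1 p k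
      have h1 : (p:ℤ)^k ∣ (u.1:ℤ)^3 + q :=
        dvd_trans (pow_dvd_pow _ (by omega)) u.2.2
      have h2 := cube_dvd_sub (c := q) hmd
      have h4 : ((u.1 % p ^ k : ℕ):ℤ)^3 + q
          = ((u.1:ℤ)^3+q) - (((u.1:ℤ)^3+q) - (((u.1 % p ^ k : ℕ):ℤ)^3+q)) := by ring
      rw [h4]
      exact h1.sub h2⟩ with hf
  apply Nat.card_eq_of_bijective f
  constructor
  · rintro ⟨u, hu, hdu⟩ ⟨v, hv, hdv⟩ h
    simp only [hf, Subtype.mk.injEq] at h ⊢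
    have hmd : (p:ℤ)^k ∣ (u : ℤ) - (v : ℤ) := by
      have d1 := dvd_sub_mod_int u p k
      have d2 := dvd_sub_mod_int v p k
      rw [h] at d1
      simpa [sub_sub_sub_cancel_right] using d1.sub d2
    obtain ⟨s, hs⟩ := hmd
    have hc : (p:ℤ)^(k+1) ∣ ((u:ℤ)^3+q) - ((v:ℤ)^3+q) := hdu.sub hdv
    have key : (p:ℤ)^(k+1) ∣ (p:ℤ)^k * (s * ((u:ℤ)^2 + (u:ℤ)*(v:ℤ) + (v:ℤ)^2)) := by
      have he : ((u:ℤ)^3+q) - ((v:ℤ)^3+q)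
          = (p:ℤ)^k * (s * ((u:ℤ)^2 + (u:ℤ)*(v:ℤ) + (v:ℤ)^2)) := by
        linear_combination ((u:ℤ)^2 + (u:ℤ)*(v:ℤ) + (v:ℤ)^2) * hs
      rwa [he] at hc
    have key2 : (p:ℤ) ∣ s * ((u:ℤ)^2 + (u:ℤ)*(v:ℤ) + (v:ℤ)^2) := by
      have he : (p:ℤ)^(k+1) = (p:ℤ)^k * (p:ℤ) := by ring
      rw [he] at key
      exact (mul_dvd_mul_iff_left (by positivity : ((p:ℤ)^k) ≠ 0)).mp key
    have hpnu : ¬ (p:ℤ) ∣ (u:ℤ) := hpu (k+1) _ (by omega) hdu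
    have hps : (p:ℤ) ∣ s := by
      rcases hpz.dvd_mul.mp key2 with h' | h'
      · exact h'
      · exfalso
        have hpvu : (p:ℤ) ∣ (v:ℤ) - (u:ℤ) := by
          have hx : (p:ℤ) ∣ (u:ℤ) - (v:ℤ) :=
            dvd_trans (dvd_pow_self _ (by omega : k ≠ 0)) ⟨s, hs⟩
          simpa using hx.neg_right
        have h3u : (p:ℤ) ∣ 3 * (u:ℤ)^2 := by
          obtain ⟨w, hw⟩ := h'
          obtain ⟨z, hz⟩ := hpvu
          exact ⟨w - z * ((v:ℤ) + 2*(u:ℤ)), by linear_combination hw - ((v:ℤ) + 2*(u:ℤ)) * hz⟩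
        rcases hpz.dvd_mul.mp h3u with h'' | h''
        · exact h3 h''
        · exact hpnu (hpz.dvd_of_dvd_pow h'')
    obtain ⟨s', hs'⟩ := hps
    have habs : ((u:ℤ) - (v:ℤ)) = 0 := by
      apply Int.eq_zero_of_abs_lt_dvd (m := (p:ℤ)^(k+1))
      · exact ⟨s', by rw [hs, hs']; ring⟩
      · have h1 : ((u:ℤ)) < (p:ℤ)^(k+1) := by exact_mod_cast hu
        have h2 : ((v:ℤ)) < (p:ℤ)^(k+1) := by exact_mod_cast hv
        have h3' : (0:ℤ) ≤ (u:ℤ) := Int.natCast_nonneg u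
        have h4 : (0:ℤ) ≤ (v:ℤ) := Int.natCast_nonneg v
        rw [abs_sub_lt_iff]
        constructor <;> linarith
    have : (u:ℤ) = (v:ℤ) := by linarith
    exact_mod_cast this
  · rintro ⟨u, hu, hdvd⟩
    obtain ⟨c, hc⟩ := hdvd
    haveI : Fact p.Prime := ⟨hp⟩
    have hpnu : ¬ (p:ℤ) ∣ (u:ℤ) := hpu k _ hk ⟨c, hc⟩
    have hunit : IsUnit ((3:ZMod p) * (u : ZMod p)^2) := by
      have hu1 : IsUnit (u : ZMod p) := by
        rw [ZMod.isUnit_iff_coprime, Nat.coprime_comm, hp.coprime_iff_not_dvd]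
        intro hdvd'
        exact hpnu (Int.natCast_dvd_natCast.mpr hdvd')
      have h31 : IsUnit (3 : ZMod p) := by
        have he : ((3:ℕ) : ZMod p) = (3 : ZMod p) := by norm_num
        rw [← he, ZMod.isUnit_iff_coprime, Nat.coprime_comm, hp.coprime_iff_not_dvd]
        intro hdvd'
        exact h3 (by exact_mod_cast Int.natCast_dvd_natCast.mpr hdvd')
      exact h31.mul (hu1.pow 2)
    set t : ℕ := ((-(c : ZMod p)) * ((3:ZMod p) * (u : ZMod p)^2)⁻¹).val with ht
    have htc : ((t:ℕ) : ZMod p) = (-(c : ZMod p)) * ((3:ZMod p) * (u : ZMod p)^2)⁻¹ := by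
      rw [ht, ZMod.natCast_val, ZMod.cast_id]
    have hkey : (p:ℤ) ∣ c + 3 * (u:ℤ)^2 * (t:ℤ) := by
      have hz : ((c + 3 * (u:ℤ)^2 * (t:ℤ) : ℤ) : ZMod p) = 0 := by
        push_cast
        rw [htc]
        have hinv := ZMod.mul_inv_of_unit _ hunit
        linear_combination (-(c : ZMod p)) * hinv
      exact (ZMod.intCast_zmod_eq_zero_iff_dvd _ _).mp hz
    obtain ⟨d, hd⟩ := hkey
    set n₀ : ℕ := u + p ^ k * t with hn₀
    have hn₀dvd : (p:ℤ)^(k+1) ∣ (n₀:ℤ)^3 + q := by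
      have hcast : (n₀:ℤ) = (u:ℤ) + (p:ℤ)^k * (t:ℤ) := by rw [hn₀]; push_cast; ring
      have he : (n₀:ℤ)^3 + q = (p:ℤ)^(k+1) * d
          + (p:ℤ)^(2*k) * (3*(u:ℤ)*(t:ℤ)^2 + (p:ℤ)^k * (t:ℤ)^3) := by
        rw [hcast]
        linear_combination hc + ((p:ℤ)^k) * hd
      rw [he]
      refine dvd_add (Dvd.intro _ rfl) (Dvd.dvd.mul_right (pow_dvd_pow _ (by omega)) _)
    refine ⟨⟨n₀ % p ^ (k+1), Nat.mod_lt _ (pow_pos hppos _), ?_⟩, ?_⟩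
    · have hmd := dvd_sub_mod_int n₀ p (k+1)
      have h2 := cube_dvd_sub (c := q) hmd
      have h4 : ((n₀ % p ^ (k+1) : ℕ):ℤ)^3 + q
          = ((n₀:ℤ)^3+q) - (((n₀:ℤ)^3+q) - (((n₀ % p ^ (k+1) : ℕ):ℤ)^3+q)) := by ring
      rw [h4]
      exact hn₀dvd.sub h2
    · simp only [hf]
      apply Subtype.ext
      simp only
      rw [Nat.mod_mod_of_dvd _ (pow_dvd_pow p (by omega : k ≤ k+1)), hn₀]
      rw [Nat.add_mul_mod_self_left]
      exact Nat.mod_eq_of_lt hu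

/-- The number of roots of `X³ + q` mod `p^m` equals the number of roots mod `p`. -/
lemma root_count (p : ℕ) (hp : p.Prime) (q : ℤ) (hq : ¬ (p:ℤ) ∣ q) (h3 : ¬ (p:ℤ) ∣ 3)
    (m : ℕ) (hm : 1 ≤ m) :
    Nat.card {u : ℕ // u < p ^ m ∧ (p:ℤ) ^ m ∣ (u:ℤ)^3 + q} =
    Nat.card {x : ZMod p // x ^ 3 = -(q : ZMod p)} := by
  haveI : Fact p.Prime := ⟨hp⟩
  induction m, hm using Nat.le_induction with
  | base =>
    apply Nat.card_congr
    refine (Equiv.subtypeEquivRight ?_).trans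
      (natSubtypeEquiv p (fun x => x ^ 3 = -(q : ZMod p)))
    intro u
    rw [pow_one, pow_one]
    constructor
    · rintro ⟨h1, h2⟩
      refine ⟨h1, ?_⟩
      have hz : (((u:ℤ)^3 + q : ℤ) : ZMod p) = 0 := (ZMod.intCast_zmod_eq_zero_iff_dvd _ _).mpr h2
      push_cast at hz
      linear_combination hz
    · rintro ⟨h1, h2⟩
      refine ⟨h1, ?_⟩
      apply (ZMod.intCast_zmod_eq_zero_iff_dvd _ _).mp
      push_cast
      linear_combination h2
  | succ n hn ih =>
    rw [hensel_step p hp q hq h3 n hn]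
    exact ih

/-- Let `p` be a prime with `p ∤ 6q` and `r = 3m ≥ 1` divisible by `3`. The number of
solutions `(u, a, b)`, with `u` a unit modulo `p^m` and `(a, b)` residues modulo `p^(6m)`,
of the system `a + 3u ≡ 0 (mod p^m)`, `3u² + 2au + b ≡ 0 (mod p^(2m))`,
`u³ + au² + bu + q ≡ 0 (mod p^(3m))` equals `n_p(q)·p^(7m)`, where
`n_p(q) = #{x ∈ F_p : x³ = -q}`. -/
theorem stmt14 (p : ℕ) [Fact p.Prime] (q : ℤ) (hpq : IsCoprime (p : ℤ) (6 * q))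
    (m : ℕ) (hm : 1 ≤ m) :
    Nat.card {x : ℕ × ℕ × ℕ //
        x.1 < p ^ m ∧ ¬ p ∣ x.1 ∧ x.2.1 < p ^ (6 * m) ∧ x.2.2 < p ^ (6 * m) ∧
        (p : ℤ) ^ m ∣ ((x.2.1 : ℤ) + 3 * (x.1 : ℤ)) ∧
        (p : ℤ) ^ (2 * m) ∣ (3 * (x.1 : ℤ) ^ 2 + 2 * (x.2.1 : ℤ) * (x.1 : ℤ) + (x.2.2 : ℤ)) ∧
        (p : ℤ) ^ (3 * m) ∣
          ((x.1 : ℤ) ^ 3 + (x.2.1 : ℤ) * (x.1 : ℤ) ^ 2 + (x.2.2 : ℤ) * (x.1 : ℤ) + q)} =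
      Nat.card {x : ZMod p // x ^ 3 = -(q : ZMod p)} * p ^ (7 * m) := by
  have hp : p.Prime := Fact.out
  have hpz : Prime (p : ℤ) := Nat.prime_iff_prime_int.mp hp
  have hpnotunit : ¬ IsUnit (p : ℤ) := hpz.not_unit
  -- p does not divide q nor 3
  have hq : ¬ (p:ℤ) ∣ q := by
    intro hdq
    exact hpnotunit (hpq.isUnit_of_dvd' dvd_rfl (Dvd.dvd.mul_left hdq 6))
  have h3 : ¬ (p:ℤ) ∣ 3 := by
    intro hd3
    exact hpnotunit (hpq.isUnit_of_dvd' dvd_rfl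
      (dvd_trans (dvd_trans hd3 (by norm_num : (3:ℤ) ∣ 6)) (Dvd.intro q rfl)))
  haveI h2ne : NeZero (p ^ (2*m)) := ⟨pow_ne_zero _ hp.pos.ne'⟩
  haveI h3ne : NeZero (p ^ (3*m)) := ⟨pow_ne_zero _ hp.pos.ne'⟩
  -- units mod p^j from p ∤ u
  have hu_unit : ∀ (u j : ℕ), ¬ p ∣ u → IsUnit ((u:ℕ) : ZMod (p^j)) := by
    intro u j hu
    rw [ZMod.isUnit_iff_coprime]
    exact Nat.Coprime.pow_right _ ((hp.coprime_iff_not_dvd.mpr hu).symm)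
  have hbnd2 : p ^ (2*m) * p ^ (4*m) = p ^ (6*m) := by rw [← pow_add]; congr 1; ring
  have hbnd3 : p ^ (3*m) * p ^ (3*m) = p ^ (6*m) := by rw [← pow_add]; congr 1; ring
  set c₂ : ℕ → ZMod (p ^ (2*m)) :=
    fun u => ((q : ZMod (p ^ (2*m))) - 2*(u : ZMod (p ^ (2*m)))^3)
      * (((u : ZMod (p ^ (2*m)))^2)⁻¹) with hc₂
  set c₃ : ℕ → ℕ → ZMod (p ^ (3*m)) :=
    fun u a => (-((u : ZMod (p ^ (3*m)))^3 + (a : ZMod (p ^ (3*m)))*(u : ZMod (p ^ (3*m)))^2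
      + (q : ZMod (p ^ (3*m))))) * ((u : ZMod (p ^ (3*m)))⁻¹) with hc₃
  set P₁ : ℕ → Prop := fun u => u < p ^ m ∧ (p:ℤ)^m ∣ (u:ℤ)^3 + q with hP₁
  set P₂ : ℕ → ℕ → Prop :=
    fun u a => a < p ^ (2*m) * p ^ (4*m) ∧ (a : ZMod (p ^ (2*m))) = c₂ u with hP₂
  set P₃ : ℕ → ℕ → ℕ → Prop :=
    fun u a b => b < p ^ (3*m) * p ^ (3*m) ∧ (b : ZMod (p ^ (3*m))) = c₃ u a with hP₃
  -- translation of the `a` congruence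
  have hcast2 : ((p ^ (2*m) : ℕ) : ℤ) = (p:ℤ)^(2*m) := by push_cast; rfl
  have hcast3 : ((p ^ (3*m) : ℕ) : ℤ) = (p:ℤ)^(3*m) := by push_cast; rfl
  have T2 : ∀ u a : ℕ, ¬ p ∣ u →
      ((p:ℤ)^(2*m) ∣ ((a:ℤ)*(u:ℤ)^2 + 2*(u:ℤ)^3 - q) ↔ (a : ZMod (p ^ (2*m))) = c₂ u) := by
    intro u a hu
    have hunit : IsUnit ((u : ZMod (p^(2*m)))^2) := (hu_unit u (2*m) hu).pow 2
    have hinv : (u : ZMod (p^(2*m)))^2 * ((u : ZMod (p^(2*m)))^2)⁻¹ = 1 :=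
      ZMod.mul_inv_of_unit _ hunit
    rw [← hcast2, ← ZMod.intCast_zmod_eq_zero_iff_dvd]
    constructor
    · intro h0
      push_cast at h0
      rw [hc₂]
      linear_combination (((u : ZMod (p^(2*m)))^2)⁻¹) * h0 - (a : ZMod (p^(2*m))) * hinv
    · intro h
      push_cast
      rw [h, hc₂]
      linear_combination ((q : ZMod (p^(2*m))) - 2*(u : ZMod (p^(2*m)))^3) * hinv
  -- translation of the `b` congruence
  have T3 : ∀ u a b : ℕ, ¬ p ∣ u →
      ((p:ℤ)^(3*m) ∣ ((b:ℤ)*(u:ℤ) + ((u:ℤ)^3 + (a:ℤ)*(u:ℤ)^2 + q)) ↔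
        (b : ZMod (p ^ (3*m))) = c₃ u a) := by
    intro u a b hu
    have hunit : IsUnit ((u : ZMod (p^(3*m)))) := hu_unit u (3*m) hu
    have hinv : (u : ZMod (p^(3*m))) * ((u : ZMod (p^(3*m))))⁻¹ = 1 :=
      ZMod.mul_inv_of_unit _ hunit
    rw [← hcast3, ← ZMod.intCast_zmod_eq_zero_iff_dvd]
    constructor
    · intro h0
      push_cast at h0
      rw [hc₃]
      linear_combination ((u : ZMod (p^(3*m)))⁻¹) * h0 - (b : ZMod (p^(3*m))) * hinv
    · intro h
      push_cast
      rw [h, hc₃]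
      linear_combination (-((u : ZMod (p ^ (3*m)))^3 + (a : ZMod (p ^ (3*m)))*(u : ZMod (p ^ (3*m)))^2
        + (q : ZMod (p ^ (3*m))))) * hinv
  have hiff : ∀ x : ℕ × ℕ × ℕ,
      (x.1 < p ^ m ∧ ¬ p ∣ x.1 ∧ x.2.1 < p ^ (6 * m) ∧ x.2.2 < p ^ (6 * m) ∧
        (p : ℤ) ^ m ∣ ((x.2.1 : ℤ) + 3 * (x.1 : ℤ)) ∧
        (p : ℤ) ^ (2 * m) ∣ (3 * (x.1 : ℤ) ^ 2 + 2 * (x.2.1 : ℤ) * (x.1 : ℤ) + (x.2.2 : ℤ)) ∧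
        (p : ℤ) ^ (3 * m) ∣
          ((x.1 : ℤ) ^ 3 + (x.2.1 : ℤ) * (x.1 : ℤ) ^ 2 + (x.2.2 : ℤ) * (x.1 : ℤ) + q)) ↔
      (P₁ x.1 ∧ P₂ x.1 x.2.1 ∧ P₃ x.1 x.2.1 x.2.2) := by
    rintro ⟨u, a, b⟩
    simp only [hP₁, hP₂, hP₃]
    constructor
    · rintro ⟨h1, h2, h3a, h4, hD1, hD2, hD3⟩
      -- C2 divisibility
      have C2dvd : (p:ℤ)^(2*m) ∣ ((a:ℤ)*(u:ℤ)^2 + 2*(u:ℤ)^3 - q) := by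
        have he : (a:ℤ)*(u:ℤ)^2 + 2*(u:ℤ)^3 - q
            = (u:ℤ) * (3 * (u:ℤ)^2 + 2*(a:ℤ)*(u:ℤ) + (b:ℤ))
              - ((u:ℤ)^3 + (a:ℤ)*(u:ℤ)^2 + (b:ℤ)*(u:ℤ) + q) := by ring
        rw [he]
        exact dvd_sub (hD2.mul_left _) (dvd_trans (pow_dvd_pow _ (by omega)) hD3)
      have C1dvd : (p:ℤ)^m ∣ (u:ℤ)^3 + q := by
        have he : (u:ℤ)^3 + q = (u:ℤ)^2 * ((a:ℤ) + 3*(u:ℤ))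
            - ((a:ℤ)*(u:ℤ)^2 + 2*(u:ℤ)^3 - q) := by ring
        rw [he]
        exact dvd_sub (hD1.mul_left _) (dvd_trans (pow_dvd_pow _ (by omega)) C2dvd)
      have C3dvd : (p:ℤ)^(3*m) ∣ ((b:ℤ)*(u:ℤ) + ((u:ℤ)^3 + (a:ℤ)*(u:ℤ)^2 + q)) := by
        have he : (b:ℤ)*(u:ℤ) + ((u:ℤ)^3 + (a:ℤ)*(u:ℤ)^2 + q)
            = (u:ℤ)^3 + (a:ℤ)*(u:ℤ)^2 + (b:ℤ)*(u:ℤ) + q := by ring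
        rw [he]
        exact hD3
      exact ⟨⟨h1, C1dvd⟩, ⟨by rw [hbnd2]; exact h3a, (T2 u a h2).mp C2dvd⟩,
        ⟨by rw [hbnd3]; exact h4, (T3 u a b h2).mp C3dvd⟩⟩
    · rintro ⟨⟨h1, hC1⟩, ⟨ha, hA⟩, ⟨hbb, hB⟩⟩
      -- p ∤ u
      have hu : ¬ p ∣ u := by
        intro hdu
        apply hq
        have hdz : (p:ℤ) ∣ (u:ℤ) := Int.natCast_dvd_natCast.mpr hdu
        have hd1 : (p:ℤ) ∣ (u:ℤ)^3 + q := dvd_trans (dvd_pow_self _ (by omega : m ≠ 0)) hC1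
        have hd2 : (p:ℤ) ∣ (u:ℤ)^3 := dvd_pow hdz (by norm_num)
        simpa using hd1.sub hd2
      have hcop : IsCoprime ((p:ℤ)) ((u:ℤ)) :=
        Nat.isCoprime_iff_coprime.mpr (hp.coprime_iff_not_dvd.mpr hu)
      have C2dvd : (p:ℤ)^(2*m) ∣ ((a:ℤ)*(u:ℤ)^2 + 2*(u:ℤ)^3 - q) := (T2 u a hu).mpr hA
      have C3dvd : (p:ℤ)^(3*m) ∣ ((b:ℤ)*(u:ℤ) + ((u:ℤ)^3 + (a:ℤ)*(u:ℤ)^2 + q)) :=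
        (T3 u a b hu).mpr hB
      have hD1 : (p:ℤ)^m ∣ ((a:ℤ) + 3*(u:ℤ)) := by
        have hmul : (p:ℤ)^m ∣ (u:ℤ)^2 * ((a:ℤ) + 3*(u:ℤ)) := by
          have he : (u:ℤ)^2 * ((a:ℤ) + 3*(u:ℤ))
              = ((a:ℤ)*(u:ℤ)^2 + 2*(u:ℤ)^3 - q) + ((u:ℤ)^3 + q) := by ring
          rw [he]
          exact dvd_add (dvd_trans (pow_dvd_pow _ (by omega)) C2dvd) hC1
        exact (hcop.pow (n := 2)).dvd_of_dvd_mul_left hmul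
      have hD2 : (p:ℤ)^(2*m) ∣ (3 * (u:ℤ)^2 + 2*(a:ℤ)*(u:ℤ) + (b:ℤ)) := by
        have hmul : (p:ℤ)^(2*m) ∣ (u:ℤ) * (3 * (u:ℤ)^2 + 2*(a:ℤ)*(u:ℤ) + (b:ℤ)) := by
          have he : (u:ℤ) * (3 * (u:ℤ)^2 + 2*(a:ℤ)*(u:ℤ) + (b:ℤ))
              = ((b:ℤ)*(u:ℤ) + ((u:ℤ)^3 + (a:ℤ)*(u:ℤ)^2 + q))
                + ((a:ℤ)*(u:ℤ)^2 + 2*(u:ℤ)^3 - q) := by ring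
          rw [he]
          exact dvd_add (dvd_trans (pow_dvd_pow _ (by omega)) C3dvd) C2dvd
        exact (hcop.pow_left).dvd_of_dvd_mul_left hmul
      have hD3 : (p:ℤ)^(3*m) ∣ ((u:ℤ)^3 + (a:ℤ)*(u:ℤ)^2 + (b:ℤ)*(u:ℤ) + q) := by
        have he : (u:ℤ)^3 + (a:ℤ)*(u:ℤ)^2 + (b:ℤ)*(u:ℤ) + q
            = (b:ℤ)*(u:ℤ) + ((u:ℤ)^3 + (a:ℤ)*(u:ℤ)^2 + q) := by ring
        rw [he]
        exact C3dvd
      exact ⟨h1, hu, by rw [← hbnd2]; exact ha, by rw [← hbnd3]; exact hbb, hD1, hD2, hD3⟩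
  have e1 := (Equiv.subtypeEquivRight hiff).trans (tripleEquiv P₁ P₂ P₃)
  have e2 := e1.trans (Equiv.sigmaCongrRight (fun u =>
    ((Equiv.sigmaCongrRight (fun a => solEquiv (p^(3*m)) (p^(3*m)) (c₃ u.1 a.1))).trans
      ((Equiv.sigmaEquivProd _ _).trans
        (Equiv.prodCongr (solEquiv (p^(2*m)) (p^(4*m)) (c₂ u.1)) (Equiv.refl _))))))
  have e3 := e2.trans (Equiv.sigmaEquivProd _ _)
  rw [Nat.card_congr e3, Nat.card_prod, Nat.card_prod]
  have hfin : ∀ n : ℕ, Nat.card (Fin n) = n := fun n => by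
    rw [Nat.card_eq_fintype_card, Fintype.card_fin]
  rw [hfin, hfin]
  have hroot : Nat.card {u : ℕ // P₁ u} = Nat.card {x : ZMod p // x ^ 3 = -(q : ZMod p)} := by
    simp only [hP₁]
    exact root_count p hp q hq h3 m hm
  rw [hroot, ← pow_add]
  congr 2
  ring
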